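/- arXiv:1705.10440 — 2 statements merged into one kernel-verified Lean document; each statement's English description precedes it below -/
import Mathlib

section
/- Let Z₁,…,Z_M be i.i.d. exponential random variables with mean 1 and let D be a strictly positive random variable independent of (Z₁,…,Z_M) with Laplace transform φ(t) = E[e^{−Dt}]. Define U_m := φ(Z_m/D). Then each U_m is uniformly distributed on (0,1). -/
open MeasureTheory ProbabilityTheory
open Filter

/-- Kimberling construction, marginal uniformity: if `Z₁,…,Z_M` are i.i.d. standard exponential
random variables, `D > 0` is independent of them with Laplace transform `φ`, and
`U_m := φ(Z_m / D)`, then each `U_m` is uniformly distributed on `(0,1)`. -/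
theorem kimberling_marginals_uniform
    {M : ℕ} {Ω : Type*} [MeasurableSpace Ω] (μ : Measure Ω) [IsProbabilityMeasure μ]
    (Z : Fin M → Ω → ℝ) (hZm : ∀ m, Measurable (Z m))
    (D : Ω → ℝ) (hDm : Measurable D) (hDpos : ∀ ω, 0 < D ω)
    (hindep : iIndepFun
      (Fin.cons D Z : Fin (M + 1) → Ω → ℝ) μ)
    (hexp : ∀ m, ∀ t : ℝ, 0 ≤ t → (μ {ω | t < Z m ω}).toReal = Real.exp (-t))
    (φ : ℝ → ℝ) (hφ : ∀ t : ℝ, 0 ≤ t → φ t = ∫ ω, Real.exp (-(D ω * t)) ∂μ) :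
    ∀ m : Fin M, ∀ u ∈ Set.Ioo (0 : ℝ) 1,
      (μ {ω | φ (Z m ω / D ω) ≤ u}).toReal = u := by
  intro m u hu
  obtain ⟨hu0, hu1⟩ := hu
  have hZmeas := hZm m
  -- measurability and integrability of the integrand
  have hmeas : ∀ t : ℝ, Measurable fun ω => Real.exp (-(D ω * t)) :=
    fun t => Real.measurable_exp.comp ((hDm.mul_const t).neg)
  have hbd : ∀ t : ℝ, 0 ≤ t → ∀ ω, ‖Real.exp (-(D ω * t))‖ ≤ (1 : ℝ) := by
    intro t ht ω
    rw [Real.norm_eq_abs, abs_of_pos (Real.exp_pos _)]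
    exact Real.exp_le_one_iff.mpr (by nlinarith [(hDpos ω).le])
  have hint : ∀ t : ℝ, 0 ≤ t → Integrable (fun ω => Real.exp (-(D ω * t))) μ := by
    intro t ht
    exact (integrable_const (1 : ℝ)).mono' (hmeas t).aestronglyMeasurable
      (Eventually.of_forall (hbd t ht))
  -- φ 0 = 1
  have hφ0 : φ 0 = 1 := by
    rw [hφ 0 le_rfl]
    simp
  -- strict antitonicity on [0, ∞)
  have hanti : StrictAntiOn φ (Set.Ici 0) := by
    intro s hs t ht hst
    have hs' : (0:ℝ) ≤ s := hs
    have ht' : (0:ℝ) ≤ t := ht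
    rw [hφ s hs', hφ t ht']
    have key : 0 < ∫ ω, (Real.exp (-(D ω * s)) - Real.exp (-(D ω * t))) ∂μ := by
      rw [integral_pos_iff_support_of_nonneg_ae]
      · have hne : Function.support (fun ω => Real.exp (-(D ω * s)) - Real.exp (-(D ω * t)))
            = Set.univ := by
          ext ω
          simp only [Function.mem_support, Set.mem_univ, iff_true]
          have h : Real.exp (-(D ω * t)) < Real.exp (-(D ω * s)) := by
            apply Real.exp_lt_exp.mpr
            have := hDpos ω
            nlinarith
          exact sub_ne_zero.mpr (ne_of_gt h)
        rw [hne]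
        simp
      · refine Eventually.of_forall fun ω => ?_
        have : Real.exp (-(D ω * t)) ≤ Real.exp (-(D ω * s)) := by
          apply Real.exp_le_exp.mpr
          have := hDpos ω
          nlinarith
        simpa using this
      · exact (hint s hs').sub (hint t ht')
    rw [integral_sub (hint s hs') (hint t ht')] at key
    linarith
  -- continuity on [0, ∞)
  have hcont : ContinuousOn φ (Set.Ici (0:ℝ)) := by
    have h1 : ContinuousOn (fun t : ℝ => ∫ ω, Real.exp (-(D ω * t)) ∂μ) (Set.Ici 0) := by
      apply continuousOn_of_dominated (bound := fun _ => (1 : ℝ))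
      · exact fun t _ => (hmeas t).aestronglyMeasurable
      · exact fun t ht => Eventually.of_forall (hbd t ht)
      · exact integrable_const 1
      · refine Eventually.of_forall fun ω => Continuous.continuousOn ?_
        continuity
    exact h1.congr fun t ht => hφ t ht
  -- φ tends to 0 along naturals
  have htend : Tendsto (fun n : ℕ => φ n) atTop (nhds 0) := by
    have h1 : Tendsto (fun n : ℕ => ∫ ω, Real.exp (-(D ω * n)) ∂μ) atTop
        (nhds (∫ ω, (0:ℝ) ∂μ)) := by
      apply tendsto_integral_of_dominated_convergence (fun _ => (1 : ℝ))
      · exact fun n => (hmeas n).aestronglyMeasurable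
      · exact integrable_const 1
      · exact fun n => Eventually.of_forall (hbd n (Nat.cast_nonneg n))
      · refine Eventually.of_forall fun ω => ?_
        have h2 : Tendsto (fun n : ℕ => D ω * n) atTop atTop :=
          Tendsto.const_mul_atTop (hDpos ω) tendsto_natCast_atTop_atTop
        have h3 : Tendsto (fun n : ℕ => -(D ω * n)) atTop atBot := tendsto_neg_atBot_iff.mpr h2
        exact Real.tendsto_exp_atBot.comp h3
    simp only [integral_zero] at h1
    exact h1.congr fun n => (hφ n (Nat.cast_nonneg n)).symm
  obtain ⟨T, hT⟩ := (htend.eventually_lt_const hu0).exists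
  -- find c > 0 with φ c = u via IVT
  have hmem : u ∈ Set.Icc (φ T) (φ 0) := ⟨hT.le, by rw [hφ0]; exact hu1.le⟩
  obtain ⟨c, hcmem, hφc⟩ := intermediate_value_Icc' (Nat.cast_nonneg T)
    (hcont.mono (fun x hx => hx.1)) hmem
  have hc0 : (0:ℝ) ≤ c := hcmem.1
  have hcpos : 0 < c := by
    rcases hc0.lt_or_eq with h | h
    · exact h
    · exfalso; rw [← h, hφ0] at hφc; linarith
  -- φ s ≤ u ↔ c ≤ s for s ≥ 0
  have hiff : ∀ s : ℝ, 0 ≤ s → (φ s ≤ u ↔ c ≤ s) := by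
    intro s hs
    rw [← hφc]
    exact hanti.le_iff_ge hs hc0
  -- Z m > 0 a.e.
  have hZpos : ∀ᵐ ω ∂μ, 0 < Z m ω := by
    have hms : MeasurableSet {ω | (0:ℝ) < Z m ω} := measurableSet_lt measurable_const hZmeas
    have h1 : μ {ω | (0:ℝ) < Z m ω} = 1 := by
      have h2 := hexp m 0 le_rfl
      simp only [neg_zero, Real.exp_zero] at h2
      rw [← ENNReal.ofReal_toReal (measure_ne_top μ _), h2]; simp
    rw [ae_iff]
    have : {ω | ¬ 0 < Z m ω} = {ω | (0:ℝ) < Z m ω}ᶜ := by ext ω; simp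
    rw [this, measure_compl hms (measure_ne_top μ _), h1, measure_univ, tsub_self]
  -- the two events agree a.e.
  have hAB : μ {ω | φ (Z m ω / D ω) ≤ u} = μ {ω | c * D ω ≤ Z m ω} := by
    apply measure_congr
    rw [Filter.eventuallyEq_set]
    refine hZpos.mono fun ω hω => ?_
    have hd := hDpos ω
    simp only [Set.mem_setOf_eq]
    rw [hiff (Z m ω / D ω) (div_nonneg hω.le hd.le), le_div_iff₀ hd]
  -- distributions
  set ν := μ.map D with hνdef
  set ρ := μ.map (Z m) with hρdef
  have hνprob : IsProbabilityMeasure ν := Measure.isProbabilityMeasure_map hDm.aemeasurable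
  have hρprob : IsProbabilityMeasure ρ := Measure.isProbabilityMeasure_map hZmeas.aemeasurable
  -- ρ of Ioi
  have hρIoi : ∀ x : ℝ, 0 ≤ x → ρ (Set.Ioi x) = ENNReal.ofReal (Real.exp (-x)) := by
    intro x hx
    have h1 : ρ (Set.Ioi x) = μ {ω | x < Z m ω} := by
      rw [hρdef, Measure.map_apply hZmeas measurableSet_Ioi]; rfl
    rw [← ENNReal.ofReal_toReal (measure_ne_top ρ _), h1, hexp m x hx]
  -- ρ of Ici for x > 0
  have hρIci : ∀ x : ℝ, 0 < x → ρ (Set.Ici x) = ENNReal.ofReal (Real.exp (-x)) := by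
    intro x hx
    have hsing : ρ {x} = 0 := by
      have key : ∀ n : ℕ, (ρ {x}).toReal ≤ Real.exp (-(x - x/(n+1))) - Real.exp (-x) := by
        intro n
        have hnpos : (0:ℝ) < n + 1 := by positivity
        have hs0 : (0:ℝ) ≤ x - x/(n+1) := sub_nonneg.mpr (div_le_self hx.le (by linarith))
        have hsx : x - x/(n+1) < x := sub_lt_self x (by positivity)
        have h1 : ρ {x} ≤ ρ (Set.Ioc (x - x/(n+1)) x) := by
          apply measure_mono
          intro y hy
          simp only [Set.mem_singleton_iff] at hy
          subst hy
          exact ⟨hsx, le_rfl⟩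
        have h2 : ρ (Set.Ioc (x - x/(n+1)) x) = ρ (Set.Ioi (x - x/(n+1))) - ρ (Set.Ioi x) := by
          rw [← Set.Ioi_diff_Ioi]
          exact measure_diff (Set.Ioi_subset_Ioi hsx.le) measurableSet_Ioi.nullMeasurableSet
            (measure_ne_top ρ _)
        have h3 : (ρ (Set.Ioc (x - x/(n+1)) x)).toReal
            = Real.exp (-(x - x/(n+1))) - Real.exp (-x) := by
          rw [h2, hρIoi _ hs0, hρIoi _ hx.le,
            ENNReal.toReal_sub_of_le (by
              exact ENNReal.ofReal_le_ofReal (Real.exp_le_exp.mpr (by linarith)))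
              ENNReal.ofReal_ne_top,
            ENNReal.toReal_ofReal (Real.exp_pos _).le, ENNReal.toReal_ofReal (Real.exp_pos _).le]
        calc (ρ {x}).toReal ≤ (ρ (Set.Ioc (x - x/(n+1)) x)).toReal :=
              ENNReal.toReal_mono (measure_ne_top ρ _) h1
          _ = _ := h3
      have hlim : Tendsto (fun n : ℕ => Real.exp (-(x - x/(n+1))) - Real.exp (-x)) atTop
          (nhds 0) := by
        have h1 : Tendsto (fun n : ℕ => x / (n+1)) atTop (nhds 0) := by
          have := tendsto_natCast_atTop_atTop (R := ℝ)
          exact Tendsto.div_atTop tendsto_const_nhds (tendsto_atTop_add_const_right _ 1 this)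
        have h2 : Tendsto (fun n : ℕ => x - x/(n+1)) atTop (nhds x) := by
          have hc : Tendsto (fun _ : ℕ => x) atTop (nhds x) := tendsto_const_nhds
          simpa using hc.sub h1
        have h3 := (Real.continuous_exp.tendsto (-x)).comp h2.neg
        have h4 : Tendsto (fun n : ℕ => Real.exp (-(x - x/(n+1)))) atTop
            (nhds (Real.exp (-x))) := h3
        have hc : Tendsto (fun _ : ℕ => Real.exp (-x)) atTop (nhds (Real.exp (-x))) :=
          tendsto_const_nhds
        simpa using h4.sub hc
      have hle : (ρ {x}).toReal ≤ 0 :=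
        le_of_tendsto_of_tendsto' tendsto_const_nhds hlim key
      have := le_antisymm hle ENNReal.toReal_nonneg
      rcases (ENNReal.toReal_eq_zero_iff _).mp this with h | h
      · exact h
      · exact absurd h (measure_ne_top ρ _)
    have h1 : Set.Ici x = {x} ∪ Set.Ioi x := by
      ext y; simp [le_iff_lt_or_eq, or_comm, eq_comm]
    refine le_antisymm ?_ ?_
    · calc ρ (Set.Ici x) ≤ ρ {x} + ρ (Set.Ioi x) := h1 ▸ measure_union_le _ _
        _ = ρ (Set.Ioi x) := by rw [hsing, zero_add]
        _ = _ := hρIoi x hx.le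
    · rw [← hρIoi x hx.le]; exact measure_mono Set.Ioi_subset_Ici_self
  -- independence
  have hindep2 : IndepFun D (Z m) μ := by
    have h := hindep.indepFun (i := 0) (j := m.succ) (Fin.succ_ne_zero m).symm
    simpa using h
  have hmap : μ.map (fun ω => (D ω, Z m ω)) = ν.prod ρ :=
    (indepFun_iff_map_prod_eq_prod_map_map hDm.aemeasurable hZmeas.aemeasurable).mp hindep2
  have hS : MeasurableSet {p : ℝ × ℝ | c * p.1 ≤ p.2} :=
    measurableSet_le (measurable_const.mul measurable_fst) measurable_snd
  have hB : μ {ω | c * D ω ≤ Z m ω} = (ν.prod ρ) {p : ℝ × ℝ | c * p.1 ≤ p.2} := by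
    rw [← hmap, Measure.map_apply (hDm.prodMk hZmeas) hS]; rfl
  have hν_ae : ∀ᵐ d ∂ν, 0 < d := by
    rw [hνdef]
    have : MeasurableSet {d : ℝ | 0 < d} := measurableSet_lt measurable_const measurable_id
    exact (ae_map_iff hDm.aemeasurable this).mpr (Eventually.of_forall hDpos)
  have hprod : (ν.prod ρ) {p : ℝ × ℝ | c * p.1 ≤ p.2}
      = ∫⁻ d, ρ (Set.Ici (c * d)) ∂ν := by
    have hpre : ∀ d : ℝ, Prod.mk d ⁻¹' {p : ℝ × ℝ | c * p.1 ≤ p.2} = Set.Ici (c * d) := by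
      intro d; ext z; simp [Set.mem_Ici]
    rw [Measure.prod_apply hS]
    exact lintegral_congr fun d => by rw [hpre d]
  have hlint : ∫⁻ d, ρ (Set.Ici (c * d)) ∂ν
      = ∫⁻ d, ENNReal.ofReal (Real.exp (-(c * d))) ∂ν := by
    refine lintegral_congr_ae (hν_ae.mono fun d hd => ?_)
    exact hρIci _ (by positivity)
  have hmeasν : Measurable fun d : ℝ => Real.exp (-(c * d)) :=
    Real.measurable_exp.comp ((measurable_const.mul measurable_id).neg)
  have hintν : Integrable (fun d => Real.exp (-(c * d))) ν := by
    refine (integrable_const (1:ℝ)).mono' hmeasν.aestronglyMeasurable ?_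
    refine hν_ae.mono fun d hd => ?_
    rw [Real.norm_eq_abs, abs_of_pos (Real.exp_pos _)]
    exact Real.exp_le_one_iff.mpr (by nlinarith)
  have hofReal : ∫⁻ d, ENNReal.ofReal (Real.exp (-(c * d))) ∂ν
      = ENNReal.ofReal (∫ d, Real.exp (-(c * d)) ∂ν) :=
    (ofReal_integral_eq_lintegral_ofReal hintν
      (Eventually.of_forall fun d => (Real.exp_pos _).le)).symm
  have hchange : ∫ d, Real.exp (-(c * d)) ∂ν = ∫ ω, Real.exp (-(D ω * c)) ∂μ := by
    rw [hνdef, integral_map hDm.aemeasurable hmeasν.aestronglyMeasurable]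
    simp_rw [mul_comm c]
  have hfinal : μ {ω | φ (Z m ω / D ω) ≤ u} = ENNReal.ofReal u := by
    rw [hAB, hB, hprod, hlint, hofReal, hchange, ← hφ c hcpos.le, hφc]
  rw [hfinal, ENNReal.toReal_ofReal hu0.le]
end

section
/- Under the Kimberling construction (Z₁,…,Z_M i.i.d. standard exponentials, D > 0 independent with Laplace transform φ, U_m = φ(Z_m/D)), the joint distribution satisfies Pr[U₁ ≤ u₁, …, U_M ≤ u_M] = φ(Σ_{m=1}^M φ⁻¹(u_m)). -/
open MeasureTheory ProbabilityTheory Filter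
open scoped ENNReal Topology


/-- Joint law of finitely many independent random variables is the product measure. -/
lemma kimb_joint_law {n : ℕ} {Ω : Type*} [MeasurableSpace Ω] (μ : Measure Ω)
    [IsProbabilityMeasure μ] (X : Fin n → Ω → ℝ) (hXm : ∀ i, Measurable (X i))
    (hindep : iIndepFun X μ) :
    μ.map (fun ω i => X i ω) = Measure.pi (fun i => μ.map (X i)) := by
  haveI : ∀ i, IsProbabilityMeasure (μ.map (X i)) :=
    fun i => Measure.isProbabilityMeasure_map (hXm i).aemeasurable
  refine (Measure.pi_eq fun s hs => ?_).symm
  rw [Measure.map_apply (measurable_pi_lambda _ hXm) (MeasurableSet.univ_pi hs)]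
  have : (fun ω i => X i ω) ⁻¹' Set.pi Set.univ s = ⋂ i ∈ Finset.univ, X i ⁻¹' s i := by
    ext ω; simp [Set.mem_pi]
  rw [this, hindep.measure_inter_preimage_eq_mul Finset.univ (fun i _ => hs i)]
  exact Finset.prod_congr rfl fun i _ =>
    (Measure.map_apply (hXm i) (hs i)).symm

/-- Exponential tail: closed sets version. -/
lemma kimb_tail_Ici {ν : Measure ℝ} [IsProbabilityMeasure ν]
    (h : ∀ t : ℝ, 0 ≤ t → (ν (Set.Ioi t)).toReal = Real.exp (-t))
    (t : ℝ) (ht : 0 ≤ t) : ν (Set.Ici t) = ENNReal.ofReal (Real.exp (-t)) := by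
  have hIoi : ∀ r : ℝ, 0 ≤ r → ν (Set.Ioi r) = ENNReal.ofReal (Real.exp (-r)) := by
    intro r hr
    rw [← h r hr, ENNReal.ofReal_toReal (measure_ne_top ν _)]
  rcases eq_or_lt_of_le ht with rfl | htpos
  · have h1 : ν (Set.Ioi (0:ℝ)) = 1 := by
      rw [hIoi 0 le_rfl]; simp
    have h2 : (1 : ℝ≥0∞) ≤ ν (Set.Ici (0:ℝ)) := h1 ▸ measure_mono Set.Ioi_subset_Ici_self
    have h3 : ν (Set.Ici (0:ℝ)) ≤ 1 := prob_le_one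
    rw [le_antisymm h3 h2]; simp
  · -- t > 0
    set sq : ℕ → Set ℝ := fun n => Set.Ioi (t - ((n : ℝ) + 1)⁻¹) with hsq
    have hanti : Antitone sq := by
      intro a b hab
      apply Set.Ioi_subset_Ioi
      have : ((b : ℝ) + 1)⁻¹ ≤ ((a : ℝ) + 1)⁻¹ := by
        apply inv_anti₀ (by positivity)
        have : (a:ℝ) ≤ b := Nat.cast_le.mpr hab
        linarith
      linarith
    have hiInter : ⋂ n, sq n = Set.Ici t := by
      ext x
      simp only [Set.mem_iInter, hsq, Set.mem_Ioi, Set.mem_Ici]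
      constructor
      · intro hx
        by_contra hlt
        push_neg at hlt
        obtain ⟨n, hn⟩ := exists_nat_one_div_lt (sub_pos.mpr hlt)
        have := hx n
        rw [one_div] at hn
        linarith
      · intro hx n
        have : (0:ℝ) < ((n:ℝ)+1)⁻¹ := by positivity
        linarith
    have htend : Tendsto (ν ∘ sq) atTop (𝓝 (ν (Set.Ici t))) := by
      rw [← hiInter]
      exact tendsto_measure_iInter_atTop
        (fun n => measurableSet_Ioi.nullMeasurableSet) hanti ⟨0, measure_ne_top _ _⟩
    have htend2 : Tendsto (ν ∘ sq) atTop (𝓝 (ENNReal.ofReal (Real.exp (-t)))) := by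
      have hlim : Tendsto (fun n : ℕ => ENNReal.ofReal (Real.exp (-(t - ((n:ℝ)+1)⁻¹))))
          atTop (𝓝 (ENNReal.ofReal (Real.exp (-t)))) := by
        refine (ENNReal.continuous_ofReal.tendsto _).comp ?_
        refine (Real.continuous_exp.tendsto _).comp ?_
        have : Tendsto (fun n : ℕ => ((n:ℝ)+1)⁻¹) atTop (𝓝 0) :=
          tendsto_one_div_add_atTop_nhds_zero_nat.congr (by intro n; rw [one_div])
        have := (tendsto_const_nhds (x := t)).sub this
        simpa using this.neg
      refine hlim.congr' ?_
      obtain ⟨N, hN⟩ := exists_nat_one_div_lt htpos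
      filter_upwards [eventually_ge_atTop N] with n hn
      have hinv : ((n:ℝ)+1)⁻¹ ≤ ((N:ℝ)+1)⁻¹ := by
        apply inv_anti₀ (by positivity)
        have : (N:ℝ) ≤ n := Nat.cast_le.mpr hn
        linarith
      rw [one_div] at hN
      have : 0 ≤ t - ((n:ℝ)+1)⁻¹ := by linarith
      exact (hIoi _ this).symm
    exact tendsto_nhds_unique htend htend2

/-- Kimberling construction, joint distribution: with `Z₁,…,Z_M` i.i.d. standard exponentials,
`D > 0` independent with Laplace transform `φ` (strictly decreasing and continuous with
`φ(0) = 1` and generalized inverse `φinv`), and `U_m := φ(Z_m / D)`, the joint distribution is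
the Archimedean copula: `Pr[U₁ ≤ u₁, …, U_M ≤ u_M] = φ(Σ_m φ⁻¹(u_m))`. -/
theorem kimberling_joint_archimedean
    {M : ℕ} {Ω : Type*} [MeasurableSpace Ω] (μ : Measure Ω) [IsProbabilityMeasure μ]
    (Z : Fin M → Ω → ℝ) (hZm : ∀ m, Measurable (Z m))
    (D : Ω → ℝ) (hDm : Measurable D) (hDpos : ∀ ω, 0 < D ω)
    (hindep : iIndepFun
      (Fin.cons D Z : Fin (M + 1) → Ω → ℝ) μ)
    (hexp : ∀ m, ∀ t : ℝ, 0 ≤ t → (μ {ω | t < Z m ω}).toReal = Real.exp (-t))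
    (φ : ℝ → ℝ) (hφ : ∀ t : ℝ, 0 ≤ t → φ t = ∫ ω, Real.exp (-(D ω * t)) ∂μ)
    (hφ0 : φ 0 = 1) (hφanti : StrictAntiOn φ (Set.Ici (0 : ℝ)))
    (hφcont : ContinuousOn φ (Set.Ici (0 : ℝ)))
    (φinv : ℝ → ℝ)
    (hφinv_nonneg : ∀ u ∈ Set.Ioo (0 : ℝ) 1, 0 ≤ φinv u)
    (hφinv : ∀ u ∈ Set.Ioo (0 : ℝ) 1, φ (φinv u) = u)
    (u : Fin M → ℝ) (hu : ∀ m, u m ∈ Set.Ioo (0 : ℝ) 1) :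
    (μ {ω | ∀ m : Fin M, φ (Z m ω / D ω) ≤ u m}).toReal
      = φ (∑ m, φinv (u m)) := by
  classical
  set c : Fin M → ℝ := fun m => φinv (u m) with hc_def
  have hc : ∀ m, 0 ≤ c m := fun m => hφinv_nonneg (u m) (hu m)
  set s : ℝ := ∑ m, c m with hs_def
  have hs : 0 ≤ s := Finset.sum_nonneg fun m _ => hc m
  -- Step 1: rewrite the event a.e. as {∀ m, D ω * c m ≤ Z m ω}
  have hZpos : ∀ᵐ ω ∂μ, ∀ m, 0 < Z m ω := by
    rw [MeasureTheory.ae_all_iff]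
    intro m
    have h1 : μ {ω | 0 < Z m ω} = 1 := by
      have := hexp m 0 le_rfl
      simp only [neg_zero, Real.exp_zero] at this
      have hne : μ {ω | 0 < Z m ω} ≠ ⊤ := measure_ne_top _ _
      rw [← ENNReal.ofReal_toReal hne, this]; simp
    have hms : MeasurableSet {ω | 0 < Z m ω} := measurableSet_lt measurable_const (hZm m)
    rw [ae_iff]
    have : {ω | ¬ 0 < Z m ω} = {ω | 0 < Z m ω}ᶜ := by ext ω; simp
    rw [this, measure_compl hms (measure_ne_top _ _), h1, measure_univ, tsub_self]
  have hAB : μ {ω | ∀ m : Fin M, φ (Z m ω / D ω) ≤ u m}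
      = μ {ω | ∀ m : Fin M, D ω * c m ≤ Z m ω} := by
    apply measure_congr
    rw [Filter.eventuallyEq_set]
    filter_upwards [hZpos] with ω hω
    show (∀ m : Fin M, φ (Z m ω / D ω) ≤ u m) ↔ (∀ m : Fin M, D ω * c m ≤ Z m ω)
    refine forall_congr' fun m => ?_
    have hd := hDpos ω
    have hz := hω m
    have hmem1 : Z m ω / D ω ∈ Set.Ici (0:ℝ) := le_of_lt (div_pos hz hd)
    have hmem2 : c m ∈ Set.Ici (0:ℝ) := hc m
    rw [← hφinv (u m) (hu m), hφanti.le_iff_ge hmem1 hmem2, le_div_iff₀ hd, mul_comm]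
  rw [hAB]
  -- Step 2: push to the product space
  set X : Fin (M+1) → Ω → ℝ := Fin.cons D Z with hX_def
  have hXm : ∀ i, Measurable (X i) := Fin.cases hDm hZm
  haveI hprobX : ∀ i, IsProbabilityMeasure (μ.map (X i)) :=
    fun i => Measure.isProbabilityMeasure_map (hXm i).aemeasurable
  haveI hprobZ : ∀ m : Fin M, IsProbabilityMeasure (μ.map (Z m)) :=
    fun m => Measure.isProbabilityMeasure_map (hZm m).aemeasurable
  have hF : Measurable (fun ω i => X i ω) := measurable_pi_lambda _ hXm
  have hmap : μ.map (fun ω i => X i ω) = Measure.pi (fun i => μ.map (X i)) :=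
    kimb_joint_law μ X hXm hindep
  set S : Set (Fin (M+1) → ℝ) := {x | ∀ m : Fin M, x 0 * c m ≤ x m.succ} with hS_def
  have hSm : MeasurableSet S := by
    rw [hS_def, Set.setOf_forall]
    exact MeasurableSet.iInter fun m =>
      measurableSet_le ((measurable_pi_apply 0).mul_const _) (measurable_pi_apply m.succ)
  have hpre : {ω | ∀ m : Fin M, D ω * c m ≤ Z m ω} = (fun ω i => X i ω) ⁻¹' S := by
    ext ω
    simp only [Set.mem_preimage, hS_def, Set.mem_setOf_eq, hX_def, Fin.cons_zero, Fin.cons_succ]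
  rw [hpre, ← Measure.map_apply hF hSm, hmap]
  -- Step 3: split off the first coordinate
  set T : Set (ℝ × (Fin M → ℝ)) := {p | ∀ m : Fin M, p.1 * c m ≤ p.2 m} with hT_def
  have hTm : MeasurableSet T := by
    rw [hT_def, Set.setOf_forall]
    exact MeasurableSet.iInter fun m =>
      measurableSet_le (measurable_fst.mul_const _) ((measurable_pi_apply m).comp measurable_snd)
  have hmp := measurePreserving_piFinSuccAbove (fun i => μ.map (X i)) 0
  have hpre2 : S = (MeasurableEquiv.piFinSuccAbove (fun _ : Fin (M+1) => ℝ) 0) ⁻¹' T := by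
    ext x
    simp only [Set.mem_preimage, hS_def, hT_def, Set.mem_setOf_eq,
      MeasurableEquiv.piFinSuccAbove, MeasurableEquiv.coe_mk, Equiv.coe_fn_mk,
      Fin.insertNthEquiv, Equiv.coe_fn_symm_mk, Fin.removeNth, Fin.zero_succAbove]
  rw [hpre2, hmp.measure_preimage_equiv]
  have hpi_eq : (Measure.pi fun j : Fin M => μ.map (X ((0 : Fin (M+1)).succAbove j)))
      = Measure.pi fun j : Fin M => μ.map (Z j) := by
    exact congrArg Measure.pi (funext fun j => by
      rw [Fin.zero_succAbove, hX_def, Fin.cons_succ])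
  have hX0 : μ.map (X 0) = μ.map D := by rw [hX_def, Fin.cons_zero]
  rw [hX0, hpi_eq]
  -- Step 4: Fubini
  haveI : IsProbabilityMeasure (μ.map D) := Measure.isProbabilityMeasure_map hDm.aemeasurable
  rw [Measure.prod_apply hTm]
  -- Step 5: compute slices a.e.
  have hDae : ∀ᵐ d ∂(μ.map D), 0 < d := by
    rw [MeasureTheory.ae_map_iff hDm.aemeasurable
      (show MeasurableSet {d : ℝ | 0 < d} from measurableSet_Ioi)]
    exact Filter.Eventually.of_forall hDpos
  have hslice : ∀ᵐ d ∂(μ.map D),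
      (Measure.pi fun j : Fin M => μ.map (Z j)) (Prod.mk d ⁻¹' T)
        = ENNReal.ofReal (Real.exp (-(d * s))) := by
    filter_upwards [hDae] with d hd
    have h1 : Prod.mk d ⁻¹' T = Set.pi Set.univ (fun m : Fin M => Set.Ici (d * c m)) := by
      ext z; simp [hT_def, Set.mem_pi, Pi.le_def]
    rw [h1, Measure.pi_pi]
    have h2 : ∀ m : Fin M, (μ.map (Z m)) (Set.Ici (d * c m))
        = ENNReal.ofReal (Real.exp (-(d * c m))) := by
      intro m
      have htail : ∀ t : ℝ, 0 ≤ t → ((μ.map (Z m)) (Set.Ioi t)).toReal = Real.exp (-t) := by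
        intro t ht
        rw [Measure.map_apply (hZm m) measurableSet_Ioi]
        exact hexp m t ht
      exact kimb_tail_Ici htail _ (mul_nonneg hd.le (hc m))
    rw [Finset.prod_congr rfl fun m _ => h2 m,
      ← ENNReal.ofReal_prod_of_nonneg (fun m _ => (Real.exp_pos _).le)]
    congr 1
    rw [← Real.exp_sum]
    congr 1
    rw [hs_def, Finset.mul_sum]
    simp
  rw [MeasureTheory.lintegral_congr_ae hslice]
  -- Step 6: back to a Bochner integral
  have hcont : Continuous fun d : ℝ => Real.exp (-(d * s)) :=
    Real.continuous_exp.comp ((continuous_id.mul continuous_const).neg)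
  have hint : Integrable (fun d : ℝ => Real.exp (-(d * s))) (μ.map D) := by
    refine (integrable_const (1:ℝ)).mono' hcont.aestronglyMeasurable ?_
    filter_upwards [hDae] with d hd
    rw [Real.norm_eq_abs, abs_of_pos (Real.exp_pos _)]
    exact Real.exp_le_one_iff.mpr (neg_nonpos.mpr (mul_nonneg hd.le hs))
  rw [← MeasureTheory.ofReal_integral_eq_lintegral_ofReal hint
    (Filter.Eventually.of_forall fun d => (Real.exp_pos _).le)]
  rw [integral_map hDm.aemeasurable hcont.aestronglyMeasurable]
  rw [← hφ s hs]
  have hφs : 0 ≤ φ s := by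
    rw [hφ s hs]
    exact integral_nonneg fun ω => (Real.exp_pos _).le
  rw [ENNReal.toReal_ofReal hφs]
end
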